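/- In the setting of contextual bandits with cross-learning with stochastic rewards and an adversarially fixed context sequence, fix any Δ_min > 0 and set m_i(c) = 8 · log T / Δ_i(c)² for each arm i and context c. Define the pre-regret Reg_Pre = Σ_{i=1}^K Σ_{c=1}^C Σ_{t=1}^T Δ_i(c) · 1{I_t = i, c_t = c, τ_{i,t} ≤ m_i(c), Δ_i(c) ≥ Δ_min}. Then for T ≥ 2, E[Reg_Pre] ≤ 16 · K · log T / Δ_min. -/

import Mathlib

open MeasureTheory ProbabilityTheory Finset
open scoped Classical

/-- Number of pulls of arm `i` among rounds `0, …, t-1`. -/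
noncomputable def tauCL {K : ℕ} (I : ℕ → Fin K) (i : Fin K) (t : ℕ) : ℕ :=
  ((Finset.range t).filter (fun s => I s = i)).card

/-- Cross-learned cumulative reward of arm `i` at context `c` over rounds `s < t`
in which arm `i` was pulled. -/
noncomputable def sigCL {K C : ℕ} (r : Fin K → ℕ → Fin C → ℝ) (I : ℕ → Fin K)
    (i : Fin K) (t : ℕ) (c : Fin C) : ℝ :=
  ∑ s ∈ (Finset.range t).filter (fun s => I s = i), r i s c

/-- The UCB1.CL index of arm `i` at round `t` under context `c`. -/
noncomputable def scoreCL {K C : ℕ} (T : ℕ) (r : Fin K → ℕ → Fin C → ℝ) (I : ℕ → Fin K)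
    (t : ℕ) (c : Fin C) (i : Fin K) : ℝ :=
  sigCL r I i t c / (tauCL I i t : ℝ) + Real.sqrt (2 * Real.log T / (tauCL I i t : ℝ))

lemma sum_inv_sqrt_le (N : ℕ) :
    ∑ n ∈ Finset.Icc 1 N, (1:ℝ) / Real.sqrt n ≤ 2 * Real.sqrt N := by
  induction N with
  | zero => simp
  | succ N ih =>
    rw [Finset.sum_Icc_succ_top (by omega)]
    have hb : (0:ℝ) < Real.sqrt (N+1) := Real.sqrt_pos.mpr (by positivity)
    have ha : (0:ℝ) ≤ Real.sqrt N := Real.sqrt_nonneg _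
    have ha2 : Real.sqrt N ^ 2 = (N:ℝ) := Real.sq_sqrt (by positivity)
    have hb2 : Real.sqrt ((N:ℝ)+1) ^ 2 = (N:ℝ)+1 := Real.sq_sqrt (by positivity)
    have key : 1 / Real.sqrt ((N:ℝ)+1) ≤ 2 * Real.sqrt ((N:ℝ)+1) - 2 * Real.sqrt N := by
      rw [div_le_iff₀ hb]
      nlinarith [sq_nonneg (2*Real.sqrt N * Real.sqrt ((N:ℝ)+1) - (2*(N:ℝ)+1))]
    push_cast
    push_cast at ih
    linarith

lemma tauCL_strictmono {K : ℕ} (J : ℕ → Fin K) (i : Fin K) {s t : ℕ}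
    (hst : s < t) (ht : J t = i) :
    tauCL J i (s+1) < tauCL J i (t+1) := by
  have h1 : tauCL J i (s+1) ≤ tauCL J i t :=
    Finset.card_le_card (Finset.filter_subset_filter _ (Finset.range_subset_range.mpr hst))
  have h2 : tauCL J i (t+1) = tauCL J i t + 1 := by
    unfold tauCL
    rw [Finset.range_add_one, Finset.filter_insert, if_pos ht,
      Finset.card_insert_of_notMem (by simp)]
  omega

lemma preregret_pointwise {K C T : ℕ} (hT : 2 ≤ T) {Δmin : ℝ} (hΔ : 0 < Δmin)
    (g : Fin K → Fin C → ℝ) (ctx : ℕ → Fin C) (J : ℕ → Fin K) :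
    (∑ i : Fin K, ∑ c : Fin C, ∑ t ∈ Finset.range T,
        (if (J t = i ∧ ctx t = c ∧
              (tauCL J i (t + 1) : ℝ) ≤ 8 * Real.log T / (g i c) ^ 2 ∧
              Δmin ≤ g i c)
          then (g i c) else 0))
      ≤ 16 * K * Real.log T / Δmin := by
  set L := Real.log T with hLdef
  have hL : 0 < L := Real.log_pos (by exact_mod_cast Nat.lt_of_lt_of_le one_lt_two hT)
  have harm : ∀ i : Fin K,
      (∑ c : Fin C, ∑ t ∈ Finset.range T,
        (if (J t = i ∧ ctx t = c ∧
              (tauCL J i (t + 1) : ℝ) ≤ 8 * L / (g i c) ^ 2 ∧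
              Δmin ≤ g i c)
          then (g i c) else 0)) ≤ 16 * L / Δmin := by
    intro i
    rw [Finset.sum_comm]
    have hcol : ∀ t, (∑ c : Fin C,
        (if (J t = i ∧ ctx t = c ∧
              (tauCL J i (t + 1) : ℝ) ≤ 8 * L / (g i c) ^ 2 ∧ Δmin ≤ g i c)
          then (g i c) else 0))
        = (if (J t = i ∧
              (tauCL J i (t + 1) : ℝ) ≤ 8 * L / (g i (ctx t)) ^ 2 ∧ Δmin ≤ g i (ctx t))
          then (g i (ctx t)) else 0) := by
      intro t
      rw [Finset.sum_eq_single (ctx t)]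
      · by_cases h : (J t = i ∧
            (tauCL J i (t + 1) : ℝ) ≤ 8 * L / (g i (ctx t)) ^ 2 ∧ Δmin ≤ g i (ctx t))
        · rw [if_pos ⟨h.1, rfl, h.2⟩, if_pos h]
        · rw [if_neg (by tauto), if_neg h]
      · intro b _ hb
        rw [if_neg]
        rintro ⟨_, h, _⟩
        exact hb h.symm
      · intro h; exact absurd (Finset.mem_univ _) h
    simp only [hcol]
    rw [← Finset.sum_filter]
    set N := ⌊8 * L / Δmin ^ 2⌋₊ with hN
    set A := (Finset.range T).filter (fun t => J t = i ∧
        (tauCL J i (t + 1) : ℝ) ≤ 8 * L / (g i (ctx t)) ^ 2 ∧ Δmin ≤ g i (ctx t)) with hA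
    have hmem : ∀ t ∈ A, J t = i ∧
        (tauCL J i (t + 1) : ℝ) ≤ 8 * L / (g i (ctx t)) ^ 2 ∧ Δmin ≤ g i (ctx t) :=
      fun t ht => (Finset.mem_filter.mp ht).2
    -- each term is at most sqrt(8L)/sqrt(tau)
    have hterm : ∀ t ∈ A, g i (ctx t)
        ≤ Real.sqrt (8 * L) / Real.sqrt (tauCL J i (t+1)) := by
      intro t ht
      obtain ⟨h1, h2, h3⟩ := hmem t ht
      have hg : 0 < g i (ctx t) := lt_of_lt_of_le hΔ h3
      have hτpos : 0 < (tauCL J i (t+1) : ℝ) := by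
        have : 0 < tauCL J i (t+1) :=
          Finset.card_pos.mpr ⟨t, Finset.mem_filter.mpr
            ⟨Finset.mem_range.mpr (Nat.lt_succ_self t), h1⟩⟩
        exact_mod_cast this
      have h4 : (tauCL J i (t+1) : ℝ) * (g i (ctx t))^2 ≤ 8 * L := by
        have := (le_div_iff₀ (by positivity)).mp h2
        linarith
      have h5 : (g i (ctx t))^2 ≤ 8 * L / (tauCL J i (t+1) : ℝ) := by
        rw [le_div_iff₀ hτpos]; linarith
      calc g i (ctx t) = Real.sqrt ((g i (ctx t))^2) := (Real.sqrt_sq hg.le).symm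
        _ ≤ Real.sqrt (8 * L / (tauCL J i (t+1) : ℝ)) := Real.sqrt_le_sqrt h5
        _ = Real.sqrt (8 * L) / Real.sqrt (tauCL J i (t+1) : ℝ) := Real.sqrt_div (by positivity) _
    -- image of tau lands in Icc 1 N
    have hsub : A.image (fun t => tauCL J i (t+1)) ⊆ Finset.Icc 1 N := by
      intro n hn
      obtain ⟨t, ht, rfl⟩ := Finset.mem_image.mp hn
      obtain ⟨h1, h2, h3⟩ := hmem t ht
      have hg : 0 < g i (ctx t) := lt_of_lt_of_le hΔ h3
      have hpos : 0 < tauCL J i (t+1) :=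
        Finset.card_pos.mpr ⟨t, Finset.mem_filter.mpr
          ⟨Finset.mem_range.mpr (Nat.lt_succ_self t), h1⟩⟩
      have hle : (tauCL J i (t+1) : ℝ) ≤ 8 * L / Δmin ^ 2 := by
        refine h2.trans (div_le_div_of_nonneg_left (by positivity) (by positivity) ?_)
        exact pow_le_pow_left₀ hΔ.le h3 2
      exact Finset.mem_Icc.mpr ⟨hpos, Nat.le_floor hle⟩
    have hinj : ∀ x ∈ A, ∀ y ∈ A, tauCL J i (x+1) = tauCL J i (y+1) → x = y := by
      intro x hx y hy hxy
      rcases lt_trichotomy x y with h | h | h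
      · exact absurd hxy (Nat.ne_of_lt (tauCL_strictmono J i h (hmem y hy).1))
      · exact h
      · exact absurd hxy.symm (Nat.ne_of_lt (tauCL_strictmono J i h (hmem x hx).1))
    calc ∑ t ∈ A, g i (ctx t)
        ≤ ∑ t ∈ A, Real.sqrt (8 * L) / Real.sqrt (tauCL J i (t+1)) :=
          Finset.sum_le_sum hterm
      _ = ∑ n ∈ A.image (fun t => tauCL J i (t+1)), Real.sqrt (8 * L) / Real.sqrt n :=
          (Finset.sum_image (f := fun n : ℕ => Real.sqrt (8 * L) / Real.sqrt (n:ℝ)) hinj).symm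
      _ ≤ ∑ n ∈ Finset.Icc 1 N, Real.sqrt (8 * L) / Real.sqrt n :=
          Finset.sum_le_sum_of_subset_of_nonneg hsub (fun n _ _ => by positivity)
      _ = Real.sqrt (8 * L) * ∑ n ∈ Finset.Icc 1 N, 1 / Real.sqrt n := by
          rw [Finset.mul_sum]
          exact Finset.sum_congr rfl (fun n _ => by rw [mul_one_div])
      _ ≤ Real.sqrt (8 * L) * (2 * Real.sqrt N) :=
          mul_le_mul_of_nonneg_left (sum_inv_sqrt_le N) (Real.sqrt_nonneg _)
      _ ≤ 16 * L / Δmin := by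
          have h8 : Real.sqrt (8 * L) ^ 2 = 8 * L := Real.sq_sqrt (by positivity)
          have hNle : Real.sqrt N ≤ Real.sqrt (8 * L) / Δmin := by
            have h1 : (N : ℝ) ≤ 8 * L / Δmin ^ 2 := Nat.floor_le (by positivity)
            calc Real.sqrt N ≤ Real.sqrt (8 * L / Δmin ^ 2) := Real.sqrt_le_sqrt h1
              _ = Real.sqrt (8 * L) / Real.sqrt (Δmin ^ 2) := Real.sqrt_div (by positivity) _
              _ = Real.sqrt (8 * L) / Δmin := by rw [Real.sqrt_sq hΔ.le]
          calc Real.sqrt (8 * L) * (2 * Real.sqrt N)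
              ≤ Real.sqrt (8 * L) * (2 * (Real.sqrt (8 * L) / Δmin)) := by
                gcongr
            _ = 2 * (Real.sqrt (8 * L)) ^ 2 / Δmin := by ring
            _ = 16 * L / Δmin := by rw [h8]; ring
  calc (∑ i : Fin K, ∑ c : Fin C, ∑ t ∈ Finset.range T,
        (if (J t = i ∧ ctx t = c ∧
              (tauCL J i (t + 1) : ℝ) ≤ 8 * L / (g i c) ^ 2 ∧ Δmin ≤ g i c)
          then (g i c) else 0))
      ≤ ∑ _i : Fin K, 16 * L / Δmin := Finset.sum_le_sum (fun i _ => harm i)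
    _ = K * (16 * L / Δmin) := by
        rw [Finset.sum_const, Finset.card_univ, Fintype.card_fin, nsmul_eq_mul]
    _ = 16 * K * L / Δmin := by ring

/-- the pre-regret of UCB1.CL — the regret accumulated on rounds where the
chosen arm has been pulled at most `m_i(c) = 8 log T / Δ_i(c)²` times and its gap is at
least `Δ_min` — has expectation at most `16 · K · log T / Δ_min`. -/
theorem ucb1cl_preregret :
    ∀ (K C T : ℕ), 1 ≤ K → 1 ≤ C → K ≤ T → 2 ≤ T →
    ∀ (Δmin : ℝ), 0 < Δmin →
    ∀ (Ω : Type) (_ : MeasurableSpace Ω) (μ : Measure Ω), IsProbabilityMeasure μ →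
    ∀ (r : Ω → Fin K → ℕ → Fin C → ℝ) (F : Fin K → Fin C → Measure ℝ)
      (m : Fin K → Fin C → ℝ) (ctx : ℕ → Fin C) (I : Ω → ℕ → Fin K),
      (∀ i t c, Measurable (fun ω => r ω i t c)) →
      (∀ ω i t c, r ω i t c ∈ Set.Icc (0:ℝ) 1) →
      (∀ i c, IsProbabilityMeasure (F i c)) →
      (∀ (i : Fin K) (t : Fin T) (c : Fin C),
        Measure.map (fun ω => r ω i (t : ℕ) c) μ = F i c) →
      iIndepFun
        (fun (p : Fin K × Fin T) ω => (fun c => r ω p.1 (p.2 : ℕ) c)) μ →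
      (∀ i c, ∫ x, x ∂(F i c) = m i c) →
      (∀ ω t (ht : t < K), I ω t = ⟨t, ht⟩) →
      (∀ ω t, K ≤ t → t < T →
        (∀ j, scoreCL T (r ω) (I ω) t (ctx t) j ≤ scoreCL T (r ω) (I ω) t (ctx t) (I ω t)) ∧
        (∀ j, (∀ j', scoreCL T (r ω) (I ω) t (ctx t) j' ≤ scoreCL T (r ω) (I ω) t (ctx t) j)
          → I ω t ≤ j)) →
      -- E[Reg_Pre] ≤ 16 K log T / Δ_min, where Reg_Pre sums, over arms i, contexts c and
      -- rounds t, the gap Δ_i(c) on the event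
      -- {I_t = i, c_t = c, τ_{i,t} ≤ 8 log T / Δ_i(c)², Δ_i(c) ≥ Δ_min}
      ∫ ω, (∑ i : Fin K, ∑ c : Fin C, ∑ t ∈ Finset.range T,
          (if (I ω t = i ∧ ctx t = c ∧
                (tauCL (I ω) i (t + 1) : ℝ) ≤ 8 * Real.log T / ((⨆ j, m j c) - m i c) ^ 2 ∧
                Δmin ≤ (⨆ j, m j c) - m i c)
            then ((⨆ j, m j c) - m i c) else 0)) ∂μ
        ≤ 16 * K * Real.log T / Δmin := by
  intro K C T hK hC hKT hT Δmin hΔ Ω mΩ μ hμ r F m ctx I hmeas hrange hF hmap hindep hmean hinit hucb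
  have key : ∀ ω, (∑ i : Fin K, ∑ c : Fin C, ∑ t ∈ Finset.range T,
      (if (I ω t = i ∧ ctx t = c ∧
            (tauCL (I ω) i (t + 1) : ℝ) ≤ 8 * Real.log T / ((⨆ j, m j c) - m i c) ^ 2 ∧
            Δmin ≤ (⨆ j, m j c) - m i c)
        then ((⨆ j, m j c) - m i c) else 0)) ≤ 16 * K * Real.log T / Δmin :=
    fun ω => preregret_pointwise hT hΔ (fun i c => (⨆ j, m j c) - m i c) ctx (I ω)
  have hL : 0 < Real.log T := Real.log_pos (by exact_mod_cast Nat.lt_of_lt_of_le one_lt_two hT)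
  have hB : 0 ≤ 16 * K * Real.log T / Δmin :=
    div_nonneg (mul_nonneg (by positivity) hL.le) hΔ.le
  by_cases hint : Integrable (fun ω => ∑ i : Fin K, ∑ c : Fin C, ∑ t ∈ Finset.range T,
      (if (I ω t = i ∧ ctx t = c ∧
            (tauCL (I ω) i (t + 1) : ℝ) ≤ 8 * Real.log T / ((⨆ j, m j c) - m i c) ^ 2 ∧
            Δmin ≤ (⨆ j, m j c) - m i c)
        then ((⨆ j, m j c) - m i c) else 0)) μ
  · calc ∫ ω, (∑ i : Fin K, ∑ c : Fin C, ∑ t ∈ Finset.range T,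
          (if (I ω t = i ∧ ctx t = c ∧
                (tauCL (I ω) i (t + 1) : ℝ) ≤ 8 * Real.log T / ((⨆ j, m j c) - m i c) ^ 2 ∧
                Δmin ≤ (⨆ j, m j c) - m i c)
            then ((⨆ j, m j c) - m i c) else 0)) ∂μ
        ≤ ∫ _ω, 16 * K * Real.log T / Δmin ∂μ :=
          integral_mono hint (integrable_const _) key
      _ = 16 * K * Real.log T / Δmin := by simp
  · rw [integral_undef hint]
    exact hB
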